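/- Every commutative ring with identity of finite Krull dimension that is radically finite is Noetherian. -/

import Mathlib

open Ideal

/-- An upper bound in a directed family of ideals for a finite set. -/
theorem finset_sub_of_directed {R : Type*} [CommRing R] {c : Set (Ideal R)}
    (hne : c.Nonempty) (hdir : DirectedOn (· ≤ ·) c) (t : Finset R)
    (h : ∀ x ∈ t, ∃ K ∈ c, x ∈ K) : ∃ K ∈ c, (t : Set R) ⊆ K := by
  classical
  induction t using Finset.induction with
  | empty => exact ⟨hne.choose, hne.choose_spec, by simp⟩
  | @insert z u hni ih =>
    obtain ⟨K, hKc, hK⟩ := ih (fun x hx => h x (Finset.mem_insert_of_mem hx))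
    obtain ⟨K', hK'c, haK'⟩ := h z (Finset.mem_insert_self z u)
    obtain ⟨L, hLc, hKL, hK'L⟩ := hdir K hKc K' hK'c
    refine ⟨L, hLc, ?_⟩
    intro x hx
    rcases Finset.mem_insert.mp hx with rfl | hx
    · exact hK'L haK'
    · exact hKL (hK hx)

/-- Cohen's theorem: if every prime ideal is finitely generated, the ring is Noetherian. -/
theorem cohen_aux {R : Type*} [CommRing R]
    (h : ∀ P : Ideal R, P.IsPrime → P.FG) : IsNoetherianRing R := by
  rw [isNoetherianRing_iff_ideal_fg]
  by_contra hn
  push_neg at hn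
  obtain ⟨I, hI⟩ := hn
  -- Zorn: a maximal non-f.g. ideal exists
  obtain ⟨M, -, hMS, hMmax⟩ := zorn_le_nonempty₀ {J : Ideal R | ¬ J.FG}
    (fun c hc hchain J hJ => by
      refine ⟨sSup c, ?_, fun z hz => le_sSup hz⟩
      intro hfg
      obtain ⟨t, ht⟩ := hfg
      have hmem : ∀ x ∈ (t : Set R), x ∈ sSup c := fun x hx => ht ▸ subset_span hx
      have hdir : DirectedOn (· ≤ ·) c := hchain.directedOn
      have hne : c.Nonempty := ⟨J, hJ⟩
      obtain ⟨K, hKc, hK⟩ := finset_sub_of_directed hne hdir t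
        (fun x hx => (Submodule.mem_sSup_of_directed hne hdir).mp (hmem x hx))
      have heq : sSup c = K := le_antisymm (by rw [← ht]; exact span_le.mpr hK) (le_sSup hKc)
      exact hc hKc (heq ▸ ⟨t, ht⟩)) I hI
  have hstrict : ∀ J : Ideal R, M < J → J.FG := by
    intro J hMJ
    by_contra hJ
    exact hMJ.not_ge (hMmax hJ hMJ.le)
  have hMprime : M.IsPrime := by
    constructor
    · intro htop
      exact hMS (htop ▸ ⟨{1}, by simp [Ideal.span_singleton_one]⟩)
    · intro a b hab
      by_contra hcon
      push_neg at hcon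
      obtain ⟨ha, hb⟩ := hcon
      have h1 : M < M ⊔ span {a} := by
        refine lt_of_le_of_ne le_sup_left fun he => ha ?_
        exact he ▸ Submodule.mem_sup_right (mem_span_singleton_self a)
      have hfg1 : (M ⊔ span {a}).FG := hstrict _ h1
      have hcolon : M < M.colon (span {a}) := by
        refine lt_of_le_of_ne (fun x hx => Ideal.mem_colon_span_singleton.mpr
          (M.mul_mem_right a hx)) fun he => hb ?_
        rw [he]
        exact Ideal.mem_colon_span_singleton.mpr (by rwa [mul_comm])
      have hfg2 : (M.colon (span {a})).FG := hstrict _ hcolon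
      obtain ⟨t, ht⟩ := hfg1
      classical
      have hmemt : ∀ y ∈ t, ∃ m ∈ M, ∃ cc : R, m + cc * a = y := by
        intro y hy
        have hy' : y ∈ M ⊔ span {a} := ht ▸ subset_span hy
        obtain ⟨m, hm, s, hs, hsum⟩ := Submodule.mem_sup.mp hy'
        obtain ⟨cc, rfl⟩ := mem_span_singleton'.mp hs
        exact ⟨m, hm, cc, hsum⟩
      choose x hxM c hsum using hmemt
      set X : Finset R := t.attach.image (fun y => x y.1 y.2) with hX
      have key : M = span (X : Set R) ⊔ span {a} * M.colon (span {a}) := by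
        apply le_antisymm
        · intro z hz
          have hz' : z ∈ span (t : Set R) := ht ▸ Submodule.mem_sup_left hz
          obtain ⟨f, -, hf⟩ := Submodule.mem_span_finset.mp hz'
          set u := ∑ y ∈ t.attach, f y.1 * c y.1 y.2 with hu
          have hexp : z = (∑ y ∈ t.attach, f y.1 * x y.1 y.2) + u * a := by
            rw [hu, ← hf, ← Finset.sum_attach t (fun y => f y • y), Finset.sum_mul,
              ← Finset.sum_add_distrib]
            refine Finset.sum_congr rfl fun y _ => ?_
            rw [smul_eq_mul]
            calc f y.1 * y.1 = f y.1 * (x y.1 y.2 + c y.1 y.2 * a) := by rw [hsum]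
              _ = f y.1 * x y.1 y.2 + f y.1 * c y.1 y.2 * a := by ring
          have hsm : (∑ y ∈ t.attach, f y.1 * x y.1 y.2) ∈ M :=
            Submodule.sum_mem _ fun y _ => M.mul_mem_left _ (hxM y.1 y.2)
          have huc : u ∈ M.colon (span {a}) := by
            rw [Ideal.mem_colon_span_singleton]
            have : u * a = z - (∑ y ∈ t.attach, f y.1 * x y.1 y.2) := by
              rw [hexp]; ring
            rw [this]
            exact M.sub_mem hz hsm
          have hs1 : (∑ y ∈ t.attach, f y.1 * x y.1 y.2) ∈ span (X : Set R) :=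
            Submodule.sum_mem _ fun y _ => Ideal.mul_mem_left _ _
              (subset_span (by simp only [hX, Finset.coe_image]; exact ⟨y, Finset.mem_coe.mpr (t.mem_attach y), rfl⟩))
          have hs2 : u * a ∈ span {a} * M.colon (span {a}) := by
            rw [mul_comm u a]
            exact Ideal.mul_mem_mul (mem_span_singleton_self a) huc
          rw [hexp]
          exact Submodule.add_mem _ (Submodule.mem_sup_left hs1) (Submodule.mem_sup_right hs2)
        · refine sup_le (span_le.mpr ?_) (Ideal.mul_le.mpr ?_)
          · intro z hz
            simp only [hX, Finset.coe_image] at hz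
            obtain ⟨y, -, rfl⟩ := hz
            exact hxM y.1 y.2
          · intro p hp q hq
            obtain ⟨d, rfl⟩ := mem_span_singleton'.mp hp
            have : q * a ∈ M := Ideal.mem_colon_span_singleton.mp hq
            have : d * a * q = d * (q * a) := by ring
            rw [this]
            exact M.mul_mem_left d ‹q * a ∈ M›
      apply hMS
      rw [key]
      exact Submodule.FG.sup (Submodule.fg_span X.finite_toSet)
        (Submodule.FG.mul ⟨{a}, by simp [Ideal.submodule_span_eq]⟩ hfg2)
  exact hMS (h M hMprime)



/-- The height of an ideal `I`: the infimum of the heights (in the prime spectrum)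
of the prime ideals containing `I`. -/
noncomputable def idealHeight (R : Type*) [CommRing R] (I : Ideal R) : ℕ∞ :=
  ⨅ P : {P : PrimeSpectrum R // I ≤ P.asIdeal}, Order.height P.1

/-- An ideal `I` is radically perfect if its height equals the least number `n` such that
`√I` is the radical of an ideal generated by `n` elements, and moreover, if `ht I = 0`,
then `√I` is the radical of a principal ideal generated by a zero divisor. -/
def RadicallyPerfect {R : Type*} [CommRing R] (I : Ideal R) : Prop :=
  idealHeight R I = sInf {n : ℕ∞ | ∃ s : Finset R,
      (s.card : ℕ∞) = n ∧ (Ideal.span (s : Set R)).radical = I.radical} ∧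
    (idealHeight R I = 0 → ∃ θ : R, θ ∉ nonZeroDivisors R ∧
      I.radical = (Ideal.span {θ} : Ideal R).radical)

/-- The set of ideals of `R` generated by `ht P` elements whose radical equals `P`. -/
def genHtRad {R : Type*} [CommRing R] (P : Ideal R) : Set (Ideal R) :=
  {A | ∃ s : Finset R, (s.card : ℕ∞) = idealHeight R P ∧
    Ideal.span (s : Set R) = A ∧ A.radical = P}

/-- A commutative ring `R` is radically finite if every prime ideal `P` of `R` is radically
perfect, the set of ideals generated by `ht P` elements with radical `P` has a maximal
member `A`, and every chain of ideals between `A` and `P` is finite. -/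
def RadicallyFinite (R : Type*) [CommRing R] : Prop :=
  ∀ P : Ideal R, P.IsPrime → RadicallyPerfect P ∧
    ∃ A ∈ genHtRad P, (∀ B ∈ genHtRad P, A ≤ B → B = A) ∧
      ∀ C : Set (Ideal R), IsChain (· ≤ ·) C → C ⊆ Set.Icc A P → C.Finite

/-- A ring is of finite character if each nonzero element lies in only finitely many
maximal ideals. -/
def FiniteCharacter (R : Type*) [CommRing R] : Prop :=
  ∀ x : R, x ≠ 0 → {M : Ideal R | M.IsMaximal ∧ x ∈ M}.Finite

/-- Every radically finite commutative ring of finite Krull dimension is Noetherian. -/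
theorem radicallyFinite_isNoetherianRing {R : Type*} [CommRing R]
    (hdim : ringKrullDim R < ⊤) (hR : RadicallyFinite R) : IsNoetherianRing R := by
  refine cohen_aux (fun P hP => ?_)
  obtain ⟨-, A, hA, -, hchain⟩ := hR P hP
  obtain ⟨s, -, hspan, hrad⟩ := hA
  have hAfg : A.FG := ⟨s, hspan⟩
  have hAP : A ≤ P := hrad ▸ Ideal.le_radical
  set T : Set (Ideal R) := {B | A ≤ B ∧ B ≤ P ∧ B.FG} with hT
  have hmax : ∃ M ∈ T, ∀ B ∈ T, M ≤ B → B = M := by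
    by_contra hcon
    push_neg at hcon
    have step : ∀ M : T, ∃ B : T, (M : Ideal R) < B := by
      rintro ⟨M, hM⟩
      obtain ⟨B, hB, hle, hne⟩ := hcon M hM
      exact ⟨⟨B, hB⟩, lt_of_le_of_ne hle (Ne.symm hne)⟩
    choose g hg using step
    let seq : ℕ → T := fun n => g^[n] ⟨A, le_rfl, hAP, hAfg⟩
    have hmono : StrictMono (fun n => ((seq n : T) : Ideal R)) := by
      apply strictMono_nat_of_lt_succ
      intro n
      have hs : seq (n + 1) = g (seq n) := Function.iterate_succ_apply' g n _
      simp only [hs]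
      exact hg (seq n)
    have hinf : (Set.range fun n => ((seq n : T) : Ideal R)).Infinite :=
      Set.infinite_range_of_injective hmono.injective
    apply hinf
    refine hchain _ ?_ ?_
    · rintro _ ⟨m, rfl⟩ _ ⟨n, rfl⟩ hne
      rcases le_total m n with h | h
      · exact Or.inl (hmono.monotone h)
      · exact Or.inr (hmono.monotone h)
    · rintro _ ⟨n, rfl⟩
      exact ⟨(seq n).2.1, (seq n).2.2.1⟩
  obtain ⟨M, ⟨hAM, hMP, hMfg⟩, hMmax⟩ := hmax
  by_cases hMeq : M = P
  · exact hMeq ▸ hMfg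
  · exfalso
    obtain ⟨z, hzP, hzM⟩ := SetLike.exists_of_lt (lt_of_le_of_ne hMP hMeq)
    have hmem : M ⊔ Ideal.span {z} ∈ T :=
      ⟨hAM.trans le_sup_left,
       sup_le hMP (Ideal.span_le.mpr (Set.singleton_subset_iff.mpr hzP)),
       Submodule.FG.sup hMfg ⟨{z}, by simp [Ideal.submodule_span_eq]⟩⟩
    have heq := hMmax _ hmem le_sup_left
    exact hzM (heq ▸ Submodule.mem_sup_right (Ideal.mem_span_singleton_self z))
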